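/- For every n ≥ 4, the weight of the Steinhaus triangle generated by e₃ = (0,0,0,1,0,…,0) ∈ F₂ⁿ equals (9n-27)/4 if n ≡ 3 (mod 4), and ⌊(9n-20)/4⌋ otherwise. -/

import Mathlib

/-- The derivative of a binary sequence: `(∂x)ᵢ = xᵢ + xᵢ₊₁`. -/
def der {n : ℕ} (x : Fin n → ZMod 2) : Fin (n - 1) → ZMod 2 :=
  fun i => x ⟨i.1, by have := i.2; omega⟩ + x ⟨i.1 + 1, by have := i.2; omega⟩

/-- The iterated derivative `∂ʲx : F₂^{n-j}`. -/
def derIter {n : ℕ} (x : Fin n → ZMod 2) : (j : ℕ) → Fin (n - j) → ZMod 2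
  | 0 => x
  | j + 1 => der (derIter x j)

/-- The weight (number of ones) of a binary sequence. -/
def wt {m : ℕ} (y : Fin m → ZMod 2) : ℕ :=
  (Finset.univ.filter fun i => y i = 1).card

/-- The weight of the Steinhaus triangle of `x`: the sum of the weights of all rows. -/
def tw {n : ℕ} (x : Fin n → ZMod 2) : ℕ :=
  ∑ j ∈ Finset.range n, wt (derIter x j)

/-- The standard basis vector `e k` with a single one in position `k`. -/
def e (n k : ℕ) : Fin n → ZMod 2 := fun i => if i.1 = k then 1 else 0

lemma row0 (m : ℕ) (i : Fin (m - 0)) :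
    derIter (e m 3) 0 i = if i.1 = 3 then 1 else 0 := rfl

lemma row1 (m : ℕ) (i : Fin (m-1)) :
    derIter (e m 3) 1 i = if i.1 = 2 ∨ i.1 = 3 then 1 else 0 := by
  show der (e m 3) i = _
  simp only [der, e]
  split_ifs <;> first | rfl | omega

lemma row2 (m : ℕ) (i : Fin (m-2)) :
    derIter (e m 3) 2 i = if i.1 = 1 ∨ i.1 = 3 then 1 else 0 := by
  show der (der (e m 3)) i = _
  simp only [der, e]
  split_ifs <;> first | rfl | omega

lemma row3 (m : ℕ) (i : Fin (m-3)) :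
    derIter (e m 3) 3 i = if i.1 ≤ 3 then 1 else 0 := by
  show der (der (der (e m 3))) i = _
  simp only [der, e]
  split_ifs <;> first | rfl | omega

lemma row4 (m : ℕ) (i : Fin (m-4)) :
    derIter (e m 3) 4 i = if i.1 = 3 then 1 else 0 := by
  show der (der (der (der (e m 3)))) i = _
  simp only [der, e]
  split_ifs <;> first | rfl | omega

lemma shift (n j : ℕ) (i : Fin (n + 4 - (4 + j))) (hj : j ≤ n) :
    derIter (e (n+4) 3) (4+j) i = derIter (e n 3) j ⟨i.1, by have := i.2; omega⟩ := by
  induction j with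
  | zero =>
      have := row4 (n+4) ⟨i.1, by have := i.2; omega⟩
      exact this
  | succ j ih =>
      show der (derIter (e (n+4) 3) (4+j)) i = der (derIter (e n 3) j) _
      simp only [der]
      rw [ih _ (by omega), ih _ (by omega)]

lemma wt_ind {L : ℕ} (S : ℕ → Prop) [DecidablePred S] (y : Fin L → ZMod 2)
    (h : ∀ i, y i = if S i.1 then 1 else 0) :
    wt y = ((Finset.range L).filter S).card := by
  unfold wt
  apply Finset.card_bij (fun (a : Fin L) _ => a.1)
  · intro a ha
    simp only [Finset.mem_filter, Finset.mem_univ, true_and, h a] at ha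
    simp only [Finset.mem_filter, Finset.mem_range]
    constructor
    · exact a.2
    · by_contra hs; simp [hs] at ha
  · intro a _ b _ hab; exact Fin.ext hab
  · intro b hb
    simp only [Finset.mem_filter, Finset.mem_range] at hb
    exact ⟨⟨b, hb.1⟩, by simp [Finset.mem_filter, h, hb.2], rfl⟩

lemma wt_congr {a b : ℕ} (h : a = b) (y : Fin a → ZMod 2) (z : Fin b → ZMod 2)
    (hyz : ∀ i : Fin a, y i = z ⟨i.1, h ▸ i.2⟩) : wt y = wt z := by
  subst h
  have : y = z := funext fun i => hyz i
  rw [this]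

lemma sum_range_add' (f : ℕ → ℕ) (n : ℕ) :
    ∑ j ∈ Finset.range (n + 4) , f j = (∑ j ∈ Finset.range 4, f j) + ∑ j ∈ Finset.range n, f (4 + j) := by
  induction n with
  | zero => simp
  | succ n ih =>
      rw [show n + 1 + 4 = (n + 4) + 1 by omega, Finset.sum_range_succ, ih,
        Finset.sum_range_succ (fun j => f (4+j)) n, Nat.add_comm 4 n]
      omega

lemma filter_eq3 (L : ℕ) (hL : 4 ≤ L) :
    ((Finset.range L).filter (fun i => i = 3)).card = 1 := by
  have : (Finset.range L).filter (fun i => i = 3) = {3} := by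
    ext a
    simp only [Finset.mem_filter, Finset.mem_range, Finset.mem_singleton]
    omega
  rw [this]; rfl

lemma tw_rec (n : ℕ) (hn : 4 ≤ n) : tw (e (n + 4) 3) = tw (e n 3) + 9 := by
  unfold tw
  rw [sum_range_add' (fun j => wt (derIter (e (n+4) 3) j)) n]
  have htail : ∀ j ∈ Finset.range n, wt (derIter (e (n+4) 3) (4+j)) = wt (derIter (e n 3) j) := by
    intro j hj
    simp only [Finset.mem_range] at hj
    exact wt_congr (by omega) _ _ (fun i => shift n j i (by omega))
  rw [Finset.sum_congr rfl htail]
  have h0 : wt (derIter (e (n+4) 3) 0) = 1 := by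
    rw [wt_ind (fun i => i = 3) _ (row0 (n+4))]
    exact filter_eq3 _ (by omega)
  have h1 : wt (derIter (e (n+4) 3) 1) = 2 := by
    rw [wt_ind (fun i => i = 2 ∨ i = 3) _ (row1 (n+4))]
    have : ((Finset.range (n+4-1)).filter (fun i => i = 2 ∨ i = 3)) = {2, 3} := by
      ext a
      simp only [Finset.mem_filter, Finset.mem_range, Finset.mem_insert, Finset.mem_singleton]
      omega
    rw [this]; rfl
  have h2 : wt (derIter (e (n+4) 3) 2) = 2 := by
    rw [wt_ind (fun i => i = 1 ∨ i = 3) _ (row2 (n+4))]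
    have : ((Finset.range (n+4-2)).filter (fun i => i = 1 ∨ i = 3)) = {1, 3} := by
      ext a
      simp only [Finset.mem_filter, Finset.mem_range, Finset.mem_insert, Finset.mem_singleton]
      omega
    rw [this]; rfl
  have h3 : wt (derIter (e (n+4) 3) 3) = 4 := by
    rw [wt_ind (fun i => i ≤ 3) _ (row3 (n+4))]
    have : ((Finset.range (n+4-3)).filter (fun i => i ≤ 3)) = {0, 1, 2, 3} := by
      ext a
      simp only [Finset.mem_filter, Finset.mem_range, Finset.mem_insert, Finset.mem_singleton]
      omega
    rw [this]; rfl
  rw [show (4 : ℕ) = 3 + 1 by rfl, Finset.sum_range_succ,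
    show (3 : ℕ) = 2 + 1 by rfl, Finset.sum_range_succ,
    show (2 : ℕ) = 1 + 1 by rfl, Finset.sum_range_succ, Finset.sum_range_one]
  rw [h0, h1, h2, h3]
  omega

theorem stmt5 (n : ℕ) (hn : 4 ≤ n) :
    tw (e n 3) = if n % 4 = 3 then (9 * n - 27) / 4 else (9 * n - 20) / 4 := by
  induction n using Nat.strong_induction_on with
  | _ n ih =>
    rcases lt_or_ge n 8 with h8 | h8
    · interval_cases n
      · show tw (e 4 3) = 4; decide
      · show tw (e 5 3) = 6; decide
      · show tw (e 6 3) = 8; decide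
      · show tw (e 7 3) = 9; decide
    · obtain ⟨m, rfl⟩ : ∃ m, n = m + 4 := ⟨n - 4, by omega⟩
      have hm : 4 ≤ m := by omega
      have hih := ih m (by omega) hm
      rw [tw_rec m hm, hih]
      have hmod : (m + 4) % 4 = m % 4 := by omega
      by_cases h : m % 4 = 3
      · rw [if_pos h, if_pos (by omega)]
        omega
      · rw [if_neg h, if_neg (by omega)]
        omega
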